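/- For every finite guarded recursive specification E over BTA in which no internal actions occur and every variable X of E, there exists a closed PGA term P (over the set of basic instructions taken to be the set of basic actions) such that the thread |P| extracted from P equals the X-component of the unique solution of E in the projective limit model. -/

import Mathlib

inductive FinThread (A : Type) : Type where
  | dead : FinThread A
  | term : FinThread A
  | pcc : FinThread A → A → FinThread A → FinThread A

namespace FinThread
def proj {A : Type} : ℕ → FinThread A → FinThread A
  | 0, _ => .dead
  | _ + 1, .dead => .dead
  | _ + 1, .term => .term
  | n + 1, .pcc x a y => .pcc (proj n x) a (proj n y)
end FinThread

structure Thread (A : Type) : Type where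
  approx : ℕ → FinThread A
  coh : ∀ n, FinThread.proj n (approx (n + 1)) = approx n

/-- One step of behaviour over a state space `S`: inaction, termination, or
performing an action `a` with a state for the positive and one for the
negative reply. -/
inductive Step (A S : Type) : Type where
  | dead : Step A S
  | term : Step A S
  | node : S → A → S → Step A S

def stepApply {A S : Type} (g : S → FinThread A) : Step A S → FinThread A
  | .dead => .dead
  | .term => .term
  | .node s1 a s2 => .pcc (g s1) a (g s2)

/-- Approximations up to a given depth of the behaviour of a coalgebra. -/
def unfoldAux {A S : Type} (f : S → Step A S) : ℕ → S → FinThread A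
  | 0, _ => .dead
  | n + 1, s => stepApply (unfoldAux f n) (f s)

theorem proj_unfoldAux {A S : Type} (f : S → Step A S) :
    ∀ (n : ℕ) (s : S), FinThread.proj n (unfoldAux f (n + 1) s) = unfoldAux f n s := by
  intro n
  induction n with
  | zero => intro s; rfl
  | succ n ih =>
    intro s
    show FinThread.proj (n + 1) (stepApply (unfoldAux f (n + 1)) (f s)) =
      stepApply (unfoldAux f n) (f s)
    cases h : f s <;> simp [stepApply, FinThread.proj, ih]

/-- The thread (element of the projective limit model) produced by a state of
a coalgebra. -/
def Thread.unfold {A S : Type} (f : S → Step A S) (s : S) : Thread A :=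
  ⟨fun n => unfoldAux f n s, fun n => proj_unfoldAux f n s⟩

namespace Thread

/-- Inaction D, lifted componentwise to the projective limit model. -/
def dead (A : Type) : Thread A :=
  ⟨fun _ => .dead, by intro n; cases n <;> rfl⟩

/-- Termination S, lifted componentwise to the projective limit model. -/
def term (A : Type) : Thread A :=
  ⟨fun n => match n with | 0 => .dead | _ + 1 => .term,
   by intro n; cases n <;> rfl⟩

/-- Postconditional composition, lifted componentwise (cutting each component
to the appropriate depth) to the projective limit model. -/
def pcc {A : Type} (x : Thread A) (a : A) (y : Thread A) : Thread A where
  approx := fun n => match n with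
    | 0 => .dead
    | n + 1 => .pcc (x.approx n) a (y.approx n)
  coh := by
    intro n
    cases n with
    | zero => rfl
    | succ n =>
      show FinThread.proj (n + 1) (.pcc (x.approx (n + 1)) a (y.approx (n + 1))) =
        FinThread.pcc (x.approx n) a (y.approx n)
      simp [FinThread.proj, x.coh n, y.coh n]

end Thread
/-- Terms over a set `V` of variables for the right-hand sides of guarded
recursive specifications over BTA: built from D, S, postconditional
composition and variables. -/
inductive SpecTerm (A V : Type) : Type where
  | dead : SpecTerm A V
  | term : SpecTerm A V
  | var : V → SpecTerm A V
  | pcc : SpecTerm A V → A → SpecTerm A V → SpecTerm A V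

namespace SpecTerm

/-- Evaluation of a specification term in the projective limit model under an
assignment of threads to variables. -/
def eval {A V : Type} (ρ : V → Thread A) : SpecTerm A V → Thread A
  | .dead => Thread.dead A
  | .term => Thread.term A
  | .var X => ρ X
  | .pcc t a t' => Thread.pcc (t.eval ρ) a (t'.eval ρ)

end SpecTerm

/-- A recursive specification `E = {X = t_X | X ∈ V}` is guarded if each
right-hand side is of the form D, S, or `t ⊴ a ⊵ t'`. -/
def Guarded {A V : Type} (E : V → SpecTerm A V) : Prop :=
  ∀ X, E X = .dead ∨ E X = .term ∨ ∃ t a t', E X = .pcc t a t'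

/-- `ρ` is a solution of the recursive specification `E` in the projective
limit model. -/
def IsSolution {A V : Type} (E : V → SpecTerm A V) (ρ : V → Thread A) : Prop :=
  ∀ X, ρ X = (E X).eval ρ


inductive PrimInstr (B : Type) : Type where
  | basic : B → PrimInstr B
  | postest : B → PrimInstr B
  | negtest : B → PrimInstr B
  | jump : ℕ → PrimInstr B
  | halt : PrimInstr B

inductive PGA (I : Type) : Type where
  | instr : I → PGA I
  | concat : PGA I → PGA I → PGA I
  | rep : PGA I → PGA I

def InstrSeq (I : Type) : Type := List I ⊕ (ℕ → I)

namespace PGA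
def den {I : Type} : PGA I → InstrSeq I
  | .instr u => Sum.inl [u]
  | .concat P Q =>
    match P.den with
    | Sum.inl l =>
      match Q.den with
      | Sum.inl l' => Sum.inl (l ++ l')
      | Sum.inr f => Sum.inr (fun n => if n < l.length then l.getD n (f 0) else f (n - l.length))
    | Sum.inr f => Sum.inr f
  | .rep P =>
    match P.den with
    | Sum.inl [] => Sum.inl []
    | Sum.inl (a :: l) => Sum.inr (fun n => (a :: l).getD (n % (a :: l).length) a)
    | Sum.inr f => Sum.inr f
end PGA

/-- The instruction at each position (0-based) of an instruction sequence,
`none` past the end of a finite sequence. -/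
def InstrSeq.toFun {I : Type} : InstrSeq I → ℕ → Option I
  | Sum.inl l, n => l[n]?
  | Sum.inr f, n => some (f n)

section Chase
variable {I : Type} (jmp : I → Option ℕ) (s : ℕ → Option I)

/-- The target of the strict forward jump (if any) at position `i`. -/
def jumpTarget (i : ℕ) : Option ℕ :=
  match s i with
  | some u =>
    match jmp u with
    | some (l + 1) => some (i + (l + 1))
    | _ => none
  | none => none

/-- Iterated jump-following from position `i` (stabilising at non-jumps). -/
def chaseIter (i : ℕ) : ℕ → ℕ
  | 0 => i
  | k + 1 =>
    match jumpTarget jmp s (chaseIter i k) with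
    | some j => j
    | none => chaseIter i k

/-- Follow the chain of strict forward jumps from position `i`; `none` when
`i` begins an infinite chain of forward jumps. -/
noncomputable def chase (i : ℕ) : Option ℕ := by
  classical
  exact if h : ∃ k, jumpTarget jmp s (chaseIter jmp s i k) = none then
    some (chaseIter jmp s i (Nat.find h)) else none

end Chase

def PrimInstr.jmp {B : Type} : PrimInstr B → Option ℕ
  | .jump l => some l
  | _ => none


/-- The one-step behaviour of the instruction sequence `s` at position `i`. -/
noncomputable def extrStep {B : Type} (s : ℕ → Option (PrimInstr B)) (i : ℕ) :
    Step B ℕ :=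
  match chase PrimInstr.jmp s i with
  | none => .dead
  | some j =>
    match s j with
    | none => .dead
    | some (.basic a) => .node (j + 1) a (j + 1)
    | some (.postest a) => .node (j + 1) a (j + 2)
    | some (.negtest a) => .node (j + 2) a (j + 1)
    | some (.jump _) => .dead
    | some .halt => .term

/-- Thread extraction: the thread produced by a closed PGA term on execution. -/
noncomputable def PGA.extract {B : Type} (P : PGA (PrimInstr B)) : Thread B :=
  Thread.unfold (extrStep (InstrSeq.toFun P.den)) 0

/- ===== Auxiliary development for STATEMENT 7 ===== -/

section AuxDev

theorem Thread.ext' {A : Type} {x y : Thread A}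
    (h : ∀ n, x.approx n = y.approx n) : x = y := by
  cases x; cases y
  simp only [Thread.mk.injEq]
  exact funext h

theorem Thread.approx_zero {A : Type} (x : Thread A) : x.approx 0 = .dead := by
  rw [← x.coh 0]; rfl

/-- Functoriality of `Step` in the state. -/
def Step.map {A S S' : Type} (h : S' → S) : Step A S' → Step A S
  | .dead => .dead
  | .term => .term
  | .node x a y => .node (h x) a (h y)

theorem unfoldAux_map {A S S' : Type} (f : S → Step A S) (f' : S' → Step A S')
    (h : S' → S) (hc : ∀ s', Step.map h (f' s') = f (h s')) :
    ∀ (n : ℕ) (s' : S'), unfoldAux f' n s' = unfoldAux f n (h s') := by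
  intro n
  induction n with
  | zero => intro s'; rfl
  | succ n ih =>
    intro s'
    show stepApply (unfoldAux f' n) (f' s') = stepApply (unfoldAux f n) (f (h s'))
    rw [← hc s']
    cases f' s' <;> simp [Step.map, stepApply, ih]

/-- One-step head behaviour of a specification term. -/
def SpecTerm.hd {A V : Type} : SpecTerm A V → Step A (SpecTerm A V)
  | .dead => .dead
  | .term => .term
  | .var _ => .dead
  | .pcc t a t' => .node t a t'

/-- Unfold a variable once. -/
def SpecTerm.unfold1 {A V : Type} (E : V → SpecTerm A V) : SpecTerm A V → SpecTerm A V
  | .dead => .dead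
  | .term => .term
  | .var Y => E Y
  | .pcc t a t' => .pcc t a t'

/-- Coalgebra structure on specification terms induced by a guarded spec. -/
def SpecTerm.step {A V : Type} (E : V → SpecTerm A V) (t : SpecTerm A V) :
    Step A (SpecTerm A V) :=
  (SpecTerm.unfold1 E t).hd

theorem unfoldAux_step_eq {A V : Type} (E : V → SpecTerm A V) (hE : Guarded E)
    (ρ : V → Thread A) (hρ : IsSolution E ρ) :
    ∀ (n : ℕ) (t : SpecTerm A V),
      unfoldAux (SpecTerm.step E) n t = (t.eval ρ).approx n := by
  intro n
  induction n with
  | zero => intro t; rw [Thread.approx_zero]; rfl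
  | succ n ih =>
    intro t
    cases t with
    | dead => rfl
    | term => rfl
    | pcc t a t' =>
      show FinThread.pcc (unfoldAux (SpecTerm.step E) n t) a (unfoldAux (SpecTerm.step E) n t')
        = FinThread.pcc ((t.eval ρ).approx n) a ((t'.eval ρ).approx n)
      rw [ih, ih]
    | var Y =>
      have hY : (SpecTerm.var Y).eval ρ = (E Y).eval ρ := hρ Y
      rcases hE Y with h | h | ⟨u, a, u', h⟩
      · show stepApply (unfoldAux (SpecTerm.step E) n) (E Y).hd = _
        rw [hY, h]; rfl
      · show stepApply (unfoldAux (SpecTerm.step E) n) (E Y).hd = _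
        rw [hY, h]; rfl
      · show stepApply (unfoldAux (SpecTerm.step E) n) (E Y).hd = _
        rw [hY, h]
        show FinThread.pcc (unfoldAux (SpecTerm.step E) n u) a (unfoldAux (SpecTerm.step E) n u')
          = FinThread.pcc ((u.eval ρ).approx n) a ((u'.eval ρ).approx n)
        rw [ih, ih]

/-- The list of subterms of a specification term. -/
def SpecTerm.subterms {A V : Type} : SpecTerm A V → List (SpecTerm A V)
  | .dead => [.dead]
  | .term => [.term]
  | .var Y => [.var Y]
  | .pcc t a t' => .pcc t a t' :: (t.subterms ++ t'.subterms)

theorem SpecTerm.self_mem_subterms {A V : Type} (t : SpecTerm A V) :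
    t ∈ t.subterms := by
  cases t <;> simp [SpecTerm.subterms]

theorem SpecTerm.mem_subterms_pcc {A V : Type} (u : SpecTerm A V)
    {t t' : SpecTerm A V} {a : A} (h : SpecTerm.pcc t a t' ∈ u.subterms) :
    t ∈ u.subterms ∧ t' ∈ u.subterms := by
  induction u with
  | dead => simp [SpecTerm.subterms] at h
  | term => simp [SpecTerm.subterms] at h
  | var Y => simp [SpecTerm.subterms] at h
  | pcc x b y ihx ihy =>
    simp only [SpecTerm.subterms, List.mem_cons, List.mem_append] at h ⊢
    rcases h with h | h | h
    · obtain ⟨rfl, rfl, rfl⟩ : t = x ∧ a = b ∧ t' = y := by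
        injection h with h1 h2 h3; exact ⟨h1, h2, h3⟩
      exact ⟨Or.inr (Or.inl t.self_mem_subterms), Or.inr (Or.inr t'.self_mem_subterms)⟩
    · exact ⟨Or.inr (Or.inl (ihx h).1), Or.inr (Or.inl (ihx h).2)⟩
    · exact ⟨Or.inr (Or.inr (ihy h).1), Or.inr (Or.inr (ihy h).2)⟩

/-- All states reachable by the coalgebra `SpecTerm.step E` from `var X`. -/
noncomputable def allStates {A V : Type} [Fintype V] (E : V → SpecTerm A V) (X : V) :
    List (SpecTerm A V) :=
  .var X :: Finset.univ.toList.flatMap fun Y => (E Y).subterms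

theorem mem_allStates_of_subterm {A V : Type} [Fintype V] (E : V → SpecTerm A V)
    (X : V) (Y : V) {t : SpecTerm A V} (h : t ∈ (E Y).subterms) :
    t ∈ allStates E X := by
  simp only [allStates, List.mem_cons, List.mem_flatMap]
  exact Or.inr ⟨Y, by simp, h⟩

theorem allStates_closed {A V : Type} [Fintype V] (E : V → SpecTerm A V) (X : V) :
    ∀ t ∈ allStates E X, ∀ t1 a t2, SpecTerm.step E t = .node t1 a t2 →
      t1 ∈ allStates E X ∧ t2 ∈ allStates E X := by
  intro t ht t1 a t2 hstep
  cases t with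
  | dead => exact absurd hstep (by simp [SpecTerm.step, SpecTerm.unfold1, SpecTerm.hd])
  | term => exact absurd hstep (by simp [SpecTerm.step, SpecTerm.unfold1, SpecTerm.hd])
  | var Y =>
    have hstep' : (E Y).hd = .node t1 a t2 := hstep
    cases hEY : E Y with
    | dead => rw [hEY] at hstep'; exact absurd hstep' (by simp [SpecTerm.hd])
    | term => rw [hEY] at hstep'; exact absurd hstep' (by simp [SpecTerm.hd])
    | var Z => rw [hEY] at hstep'; exact absurd hstep' (by simp [SpecTerm.hd])
    | pcc u b u' =>
      rw [hEY] at hstep'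
      injection hstep' with h1 h2 h3
      have hm : SpecTerm.pcc u b u' ∈ (E Y).subterms := by
        rw [hEY]; exact SpecTerm.self_mem_subterms _
      have hc := SpecTerm.mem_subterms_pcc (E Y) hm
      exact ⟨h1 ▸ mem_allStates_of_subterm E X Y hc.1,
             h3 ▸ mem_allStates_of_subterm E X Y hc.2⟩
  | pcc u b u' =>
    have hstep' : (SpecTerm.pcc u b u').hd = .node t1 a t2 := hstep
    injection hstep' with h1 h2 h3
    have ht' : SpecTerm.pcc u b u' ∈ Finset.univ.toList.flatMap
        (fun Y => (E Y).subterms) := by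
      rcases List.mem_cons.mp ht with h | h
      · exact absurd h (by simp)
      · exact h
    rcases List.mem_flatMap.mp ht' with ⟨Y, _, hY⟩
    have hc := SpecTerm.mem_subterms_pcc (E Y) hY
    exact ⟨h1 ▸ mem_allStates_of_subterm E X Y hc.1,
           h3 ▸ mem_allStates_of_subterm E X Y hc.2⟩

/-- The coalgebra `SpecTerm.step E` restricted to the finite set of states. -/
def restrictStep {A V : Type} [Fintype V] (E : V → SpecTerm A V) (X : V)
    (s : {t : SpecTerm A V // t ∈ allStates E X}) :
    Step A {t : SpecTerm A V // t ∈ allStates E X} :=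
  match h : SpecTerm.step E s.val with
  | .dead => .dead
  | .term => .term
  | .node t1 a t2 =>
    .node ⟨t1, (allStates_closed E X s.val s.property t1 a t2 h).1⟩ a
      ⟨t2, (allStates_closed E X s.val s.property t1 a t2 h).2⟩

theorem restrictStep_map {A V : Type} [Fintype V] (E : V → SpecTerm A V) (X : V)
    (s : {t : SpecTerm A V // t ∈ allStates E X}) :
    Step.map Subtype.val (restrictStep E X s) = SpecTerm.step E s.val := by
  unfold restrictStep
  split <;> (rename_i h; exact h.symm)

theorem chase_eq_self {I : Type} (jmp : I → Option ℕ) (s : ℕ → Option I) (i : ℕ)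
    (h0 : jumpTarget jmp s i = none) : chase jmp s i = some i := by
  have h : ∃ k, jumpTarget jmp s (chaseIter jmp s i k) = none := ⟨0, h0⟩
  rw [chase, dif_pos h]
  have : Nat.find h = 0 := Nat.find_eq_zero h |>.mpr h0
  rw [this]
  rfl

theorem chase_jump {I : Type} (jmp : I → Option ℕ) (s : ℕ → Option I) (i j : ℕ)
    (h1 : jumpTarget jmp s i = some j) (h2 : jumpTarget jmp s j = none) :
    chase jmp s i = some j := by
  have hit : chaseIter jmp s i 1 = j := by
    show (match jumpTarget jmp s (chaseIter jmp s i 0) with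
      | some j => j | none => chaseIter jmp s i 0) = j
    show (match jumpTarget jmp s i with | some j => j | none => i) = j
    rw [h1]
  have h : ∃ k, jumpTarget jmp s (chaseIter jmp s i k) = none := ⟨1, by rw [hit]; exact h2⟩
  rw [chase, dif_pos h]
  have hf : Nat.find h = 1 := by
    rw [Nat.find_eq_iff]
    refine ⟨by rw [hit]; exact h2, ?_⟩
    intro k hk
    interval_cases k
    show ¬ jumpTarget jmp s i = none
    rw [h1]; simp
  rw [hf, hit]

/-- Build a PGA term from a nonempty list of instructions. -/
def fromList {I : Type} (u : I) : List I → PGA I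
  | [] => .instr u
  | v :: l => .concat (.instr u) (fromList v l)

theorem den_fromList {I : Type} (u : I) (l : List I) :
    (fromList u l).den = Sum.inl (u :: l) := by
  induction l generalizing u with
  | nil => rfl
  | cons v l ih => simp [fromList, PGA.den, ih]; rfl

theorem den_rep_fromList {I : Type} (u : I) (l : List I) :
    (PGA.rep (fromList u l)).den
      = Sum.inr (fun n => (u :: l).getD (n % (u :: l).length) u) := by
  rw [PGA.den, den_fromList]

section Core

variable {B S : Type} {m : ℕ}

/-- The instruction at position `q` (< 3*m) of the program simulating `f`. -/
def coreInstr (f : S → Step B S) (e : S ≃ Fin m) (hm : 0 < m) (q : ℕ) :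
    PrimInstr B :=
  match f (e.symm ⟨(q / 3) % m, Nat.mod_lt _ hm⟩) with
  | .dead => .jump 0
  | .term => .halt
  | .node s1 a s2 =>
    if q % 3 = 0 then .postest a
    else if q % 3 = 1 then .jump ((3 * (e s1 : ℕ) + 3 * m - q) % (3 * m))
    else .jump ((3 * (e s2 : ℕ) + 3 * m - q) % (3 * m))

/-- The instruction stream of the simulating program. -/
def coreFun (f : S → Step B S) (e : S ≃ Fin m) (hm : 0 < m) :
    ℕ → Option (PrimInstr B) :=
  fun n => some (coreInstr f e hm (n % (3 * m)))

theorem coreInstr_arg (f : S → Step B S) (e : S ≃ Fin m) (hm : 0 < m)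
    (s : S) (k : ℕ) (hk : k < 3) :
    f (e.symm ⟨(((3 * (e s : ℕ) + k) / 3) % m), Nat.mod_lt _ hm⟩) = f s := by
  have hdiv : (3 * (e s : ℕ) + k) / 3 = (e s : ℕ) := by
    rw [Nat.mul_add_div (by norm_num : 0 < 3), Nat.div_eq_of_lt hk, add_zero]
  have hfin : (⟨(((3 * (e s : ℕ) + k) / 3) % m), Nat.mod_lt _ hm⟩ : Fin m) = e s := by
    apply Fin.ext
    simp [hdiv, Nat.mod_eq_of_lt (e s).isLt]
  rw [hfin, Equiv.symm_apply_apply]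

theorem coreInstr_mod3 (e : S ≃ Fin m) (s : S) (k : ℕ) (hk : k < 3) :
    (3 * (e s : ℕ) + k) % 3 = k := by
  rw [Nat.mul_add_mod, Nat.mod_eq_of_lt hk]

theorem coreInstr_dead (f : S → Step B S) (e : S ≃ Fin m) (hm : 0 < m)
    {s : S} (hfs : f s = .dead) (k : ℕ) (hk : k < 3) :
    coreInstr f e hm (3 * (e s : ℕ) + k) = .jump 0 := by
  unfold coreInstr
  rw [coreInstr_arg f e hm s k hk, hfs]

theorem coreInstr_term (f : S → Step B S) (e : S ≃ Fin m) (hm : 0 < m)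
    {s : S} (hfs : f s = .term) (k : ℕ) (hk : k < 3) :
    coreInstr f e hm (3 * (e s : ℕ) + k) = .halt := by
  unfold coreInstr
  rw [coreInstr_arg f e hm s k hk, hfs]

theorem coreInstr_node0 (f : S → Step B S) (e : S ≃ Fin m) (hm : 0 < m)
    {s s1 s2 : S} {a : B} (hfs : f s = .node s1 a s2) :
    coreInstr f e hm (3 * (e s : ℕ)) = .postest a := by
  unfold coreInstr
  have := coreInstr_arg f e hm s 0 (by norm_num)
  rw [add_zero] at this
  rw [this, hfs]
  have h3 : (3 * (e s : ℕ)) % 3 = 0 := Nat.mul_mod_right 3 _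
  rw [h3]
  norm_num

theorem coreInstr_node1 (f : S → Step B S) (e : S ≃ Fin m) (hm : 0 < m)
    {s s1 s2 : S} {a : B} (hfs : f s = .node s1 a s2) :
    coreInstr f e hm (3 * (e s : ℕ) + 1)
      = .jump ((3 * (e s1 : ℕ) + 3 * m - (3 * (e s : ℕ) + 1)) % (3 * m)) := by
  unfold coreInstr
  rw [coreInstr_arg f e hm s 1 (by norm_num), hfs]
  rw [coreInstr_mod3 e s 1 (by norm_num)]
  norm_num

theorem coreInstr_node2 (f : S → Step B S) (e : S ≃ Fin m) (hm : 0 < m)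
    {s s1 s2 : S} {a : B} (hfs : f s = .node s1 a s2) :
    coreInstr f e hm (3 * (e s : ℕ) + 2)
      = .jump ((3 * (e s2 : ℕ) + 3 * m - (3 * (e s : ℕ) + 2)) % (3 * m)) := by
  unfold coreInstr
  rw [coreInstr_arg f e hm s 2 (by norm_num), hfs]
  rw [coreInstr_mod3 e s 2 (by norm_num)]
  norm_num

theorem coreFun_eq (f : S → Step B S) (e : S ≃ Fin m) (hm : 0 < m)
    (p : ℕ) : coreFun f e hm p = some (coreInstr f e hm (p % (3 * m))) := rfl

theorem block_lt (e : S ≃ Fin m) (s : S) (k : ℕ) (hk : k < 3) :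
    3 * (e s : ℕ) + k < 3 * m := by
  have := (e s).isLt
  omega

theorem blockstart_settled (f : S → Step B S) (e : S ≃ Fin m) (hm : 0 < m)
    (s : S) (p : ℕ) (hp : p % (3 * m) = 3 * (e s : ℕ)) :
    jumpTarget PrimInstr.jmp (coreFun f e hm) p = none := by
  have hins : coreFun f e hm p = some (coreInstr f e hm (3 * (e s : ℕ))) := by
    rw [coreFun_eq, hp]
  unfold jumpTarget
  rw [hins]
  rcases hfs : f s with _ | _ | ⟨s1, a, s2⟩
  · rw [show coreInstr f e hm (3 * (e s : ℕ)) = .jump 0 by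
      have := coreInstr_dead f e hm hfs 0 (by norm_num); rwa [add_zero] at this]
    rfl
  · rw [show coreInstr f e hm (3 * (e s : ℕ)) = .halt by
      have := coreInstr_term f e hm hfs 0 (by norm_num); rwa [add_zero] at this]
    rfl
  · rw [coreInstr_node0 f e hm hfs]
    rfl

theorem offset_chase (f : S → Step B S) (e : S ≃ Fin m) (hm : 0 < m)
    (s' : S) (p k : ℕ) (hk : k = 1 ∨ k = 2)
    (hins : coreFun f e hm p
      = some (.jump ((3 * (e s' : ℕ) + 3 * m - p % (3 * m)) % (3 * m))))
    (hpk : p % (3 * m) % 3 = k) :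
    ∃ j, chase PrimInstr.jmp (coreFun f e hm) p = some j
      ∧ j % (3 * m) = 3 * (e s' : ℕ) := by
  set N := 3 * m with hN
  have hNpos : 0 < N := by positivity
  set q := p % N with hq
  set v := 3 * (e s' : ℕ) + N - q with hv
  have hqN : q < N := Nat.mod_lt _ hNpos
  have hq_le : q ≤ 3 * (e s' : ℕ) + N := le_of_lt (lt_of_lt_of_le hqN (Nat.le_add_left _ _))
  have hvq : v + q = 3 * (e s' : ℕ) + N := Nat.sub_add_cancel hq_le
  have h3N : (3 : ℕ) ∣ N := ⟨m, rfl⟩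
  have hv3 : ¬ (3 : ℕ) ∣ v := by
    intro hdv
    have hdvq : (3 : ℕ) ∣ v + q := by
      rw [hvq]; exact Dvd.dvd.add (Dvd.intro _ rfl) h3N
    have : (3 : ℕ) ∣ q := (Nat.dvd_add_right hdv).mp hdvq
    omega
  have hl3 : v % N % 3 = v % 3 := Nat.mod_mod_of_dvd v h3N
  have hlne : v % N ≠ 0 := by
    intro h0
    apply hv3
    have : v % 3 = 0 := by rw [← hl3, h0]
    omega
  obtain ⟨l', hl'⟩ := Nat.exists_eq_succ_of_ne_zero hlne
  have hjt : jumpTarget PrimInstr.jmp (coreFun f e hm) p = some (p + v % N) := by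
    unfold jumpTarget
    rw [hins, hl']
    rfl
  have hland : (p + v % N) % N = 3 * (e s' : ℕ) := by
    have hes' : 3 * (e s' : ℕ) < N := by
      have := (e s').isLt; omega
    calc (p + v % N) % N = (q + v % N % N) % N := by rw [Nat.add_mod p]
      _ = (q + v % N) % N := by rw [Nat.mod_mod_of_dvd _ (dvd_refl N)]
      _ = (q % N + v % N) % N := by rw [Nat.mod_eq_of_lt hqN]
      _ = (q + v) % N := (Nat.add_mod q v N).symm
      _ = (v + q) % N := by rw [Nat.add_comm]
      _ = (3 * (e s' : ℕ) + N) % N := by rw [hvq]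
      _ = 3 * (e s' : ℕ) % N := by rw [Nat.add_mod_right]
      _ = 3 * (e s' : ℕ) := Nat.mod_eq_of_lt hes'
  refine ⟨p + v % N, ?_, hland⟩
  exact chase_jump _ _ _ _ hjt (blockstart_settled f e hm s' _ hland)

theorem succ_mod_block (e : S ≃ Fin m) (hm : 0 < m) {j : ℕ} {s : S} (k : ℕ)
    (hk : k < 3) (hj : j % (3 * m) = 3 * (e s : ℕ)) (hkpos : 0 < k) :
    (j + k) % (3 * m) = 3 * (e s : ℕ) + k := by
  have hlt : 3 * (e s : ℕ) + k < 3 * m := block_lt e s k hk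
  have hkN : k < 3 * m := by omega
  calc (j + k) % (3 * m) = (j % (3 * m) + k % (3 * m)) % (3 * m) := Nat.add_mod j k _
    _ = (3 * (e s : ℕ) + k) % (3 * m) := by rw [hj, Nat.mod_eq_of_lt hkN]
    _ = 3 * (e s : ℕ) + k := Nat.mod_eq_of_lt hlt

theorem core_unfold (f : S → Step B S) (e : S ≃ Fin m) (hm : 0 < m) :
    ∀ (n p j : ℕ) (s : S),
      chase PrimInstr.jmp (coreFun f e hm) p = some j →
      j % (3 * m) = 3 * (e s : ℕ) →
      unfoldAux (extrStep (coreFun f e hm)) n p = unfoldAux f n s := by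
  intro n
  induction n with
  | zero => intro p j s _ _; rfl
  | succ n ih =>
    intro p j s hchase hj
    have hins : coreFun f e hm j = some (coreInstr f e hm (3 * (e s : ℕ))) := by
      rw [coreFun_eq, hj]
    show stepApply (unfoldAux (extrStep (coreFun f e hm)) n) (extrStep (coreFun f e hm) p)
      = stepApply (unfoldAux f n) (f s)
    rcases hfs : f s with _ | _ | ⟨s1, a, s2⟩
    · have : extrStep (coreFun f e hm) p = .dead := by
        have hi : coreInstr f e hm (3 * (e s : ℕ)) = .jump 0 := by
          have := coreInstr_dead f e hm hfs 0 (by norm_num); rwa [add_zero] at this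
        unfold extrStep
        simp only [hchase, hins, hi]
      rw [this]; rfl
    · have : extrStep (coreFun f e hm) p = .term := by
        have hi : coreInstr f e hm (3 * (e s : ℕ)) = .halt := by
          have := coreInstr_term f e hm hfs 0 (by norm_num); rwa [add_zero] at this
        unfold extrStep
        simp only [hchase, hins, hi]
      rw [this]; rfl
    · have hstep : extrStep (coreFun f e hm) p = .node (j + 1) a (j + 2) := by
        unfold extrStep
        simp only [hchase, hins, coreInstr_node0 f e hm hfs]
      rw [hstep]
      have hmod1 : (j + 1) % (3 * m) = 3 * (e s : ℕ) + 1 :=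
        succ_mod_block e hm 1 (by norm_num) hj (by norm_num)
      have hmod2 : (j + 2) % (3 * m) = 3 * (e s : ℕ) + 2 :=
        succ_mod_block e hm 2 (by norm_num) hj (by norm_num)
      obtain ⟨j1, hc1, hj1⟩ := offset_chase f e hm s1 (j + 1) 1 (Or.inl rfl)
        (by rw [coreFun_eq, hmod1, coreInstr_node1 f e hm hfs])
        (by rw [hmod1, coreInstr_mod3 e s 1 (by norm_num)])
      obtain ⟨j2, hc2, hj2⟩ := offset_chase f e hm s2 (j + 2) 2 (Or.inr rfl)
        (by rw [coreFun_eq, hmod2, coreInstr_node2 f e hm hfs])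
        (by rw [hmod2, coreInstr_mod3 e s 2 (by norm_num)])
      show FinThread.pcc (unfoldAux (extrStep (coreFun f e hm)) n (j + 1)) a
          (unfoldAux (extrStep (coreFun f e hm)) n (j + 2))
        = FinThread.pcc (unfoldAux f n s1) a (unfoldAux f n s2)
      rw [ih (j + 1) j1 s1 hc1 hj1, ih (j + 2) j2 s2 hc2 hj2]

/-- Core lemma: every state of a finite coalgebra is implemented by some
closed PGA term. -/
theorem exists_pga_of_finite {B S : Type} [Finite S] (f : S → Step B S)
    (s0 : S) : ∃ P : PGA (PrimInstr B), P.extract = Thread.unfold f s0 := by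
  classical
  haveI : Fintype S := Fintype.ofFinite S
  set m := Fintype.card S with hmdef
  have hm : 0 < m := Fintype.card_pos_iff.mpr ⟨s0⟩
  let e0 : S ≃ Fin m := Fintype.equivFin S
  let e : S ≃ Fin m := e0.trans (Equiv.swap (e0 s0) ⟨0, hm⟩)
  have he0 : e s0 = ⟨0, hm⟩ := by
    show Equiv.swap (e0 s0) ⟨0, hm⟩ (e0 s0) = ⟨0, hm⟩
    exact Equiv.swap_apply_left _ _
  set u0 : PrimInstr B := coreInstr f e hm 0 with hu0
  set ltl : List (PrimInstr B) :=
    (List.range (3 * m - 1)).map (fun q => coreInstr f e hm (q + 1)) with hltl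
  have hlist : u0 :: ltl = (List.range (3 * m)).map (coreInstr f e hm) := by
    conv_rhs => rw [show 3 * m = (3 * m - 1) + 1 from (Nat.succ_pred_eq_of_pos (by omega)).symm]
    rw [List.range_succ_eq_map, List.map_cons, List.map_map]
    rfl
  refine ⟨.rep (fromList u0 ltl), ?_⟩
  have hden : InstrSeq.toFun (PGA.rep (fromList u0 ltl)).den = coreFun f e hm := by
    funext n
    rw [den_rep_fromList]
    show some ((u0 :: ltl).getD (n % (u0 :: ltl).length) u0) = coreFun f e hm n
    rw [hlist]
    have hlen : ((List.range (3 * m)).map (coreInstr f e hm)).length = 3 * m := by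
      rw [List.length_map, List.length_range]
    rw [hlen]
    have hlt : n % (3 * m) < 3 * m := Nat.mod_lt _ (by omega)
    rw [List.getD_eq_getElem _ _ (by rw [hlen]; exact hlt)]
    rw [List.getElem_map, List.getElem_range]
    rfl
  show Thread.unfold (extrStep (InstrSeq.toFun (PGA.rep (fromList u0 ltl)).den)) 0
    = Thread.unfold f s0
  rw [hden]
  apply Thread.ext'
  intro n
  show unfoldAux (extrStep (coreFun f e hm)) n 0 = unfoldAux f n s0
  have hj : (0 : ℕ) % (3 * m) = 3 * (e s0 : ℕ) := by
    rw [he0]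
    simp
  exact core_unfold f e hm n 0 0 s0
    (chase_eq_self _ _ _ (blockstart_settled f e hm s0 0 hj)) hj

end Core

end AuxDev
/-- For every finite guarded recursive specification `E` over BTA
in which no internal actions occur (the basic actions being the basic
instructions of PGA, i.e. the action type is `B`) and every variable `X` of
`E`, there exists a closed PGA term `P` such that the thread `|P|` extracted
from `P` equals the `X`-component of the unique solution of `E` in the
projective limit model. -/
theorem spec_component_is_extract
    (B : Type) [Finite B] (V : Type) [Fintype V]
    (E : V → SpecTerm B V) (hE : Guarded E)
    (ρ : V → Thread B) (hρ : IsSolution E ρ) (X : V) :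
    ∃ P : PGA (PrimInstr B), P.extract = ρ X := by
  classical
  haveI : Finite {t : SpecTerm B V // t ∈ allStates E X} :=
    (List.finite_toSet (allStates E X)).to_subtype
  let s0 : {t : SpecTerm B V // t ∈ allStates E X} :=
    ⟨.var X, List.mem_cons_self⟩
  obtain ⟨P, hP⟩ := exists_pga_of_finite (restrictStep E X) s0
  refine ⟨P, ?_⟩
  rw [hP]
  have h1 : Thread.unfold (restrictStep E X) s0
      = Thread.unfold (SpecTerm.step E) (.var X) := by
    apply Thread.ext'
    intro n
    exact unfoldAux_map (SpecTerm.step E) (restrictStep E X) Subtype.val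
      (restrictStep_map E X) n s0
  rw [h1]
  apply Thread.ext'
  intro n
  show unfoldAux (SpecTerm.step E) n (.var X) = (ρ X).approx n
  rw [unfoldAux_step_eq E hE ρ hρ n (.var X)]
  rfl
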